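/- Let K be a simplicial complex on [n] and let f be a generic basis of ℝ^n. Then Δ^p(K) = ⋃ Δ^{<_l}(K), where the union is taken over all strict linear orders <_l on the power set of [n] that extend the strict partial order <_p. -/

import Mathlib

open scoped BigOperators

section Defs

variable {α : Type*}

/-- A family of finite sets is a simplicial complex if it is closed under taking subsets. -/
def IsComplex (K : Finset (Finset α)) : Prop :=
  ∀ σ ∈ K, ∀ τ ⊆ σ, τ ∈ K

/-- `K` is pure with all facets of cardinality `d` (i.e. pure `(d-1)`-dimensional). -/
def PureCx (d : ℕ) (K : Finset (Finset α)) : Prop :=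
  (∀ σ ∈ K, σ.card ≤ d) ∧ ∀ σ ∈ K, ∃ τ ∈ K, σ ⊆ τ ∧ τ.card = d

/-- `K` is `(d-1)`-dimensional: the largest faces have `d` elements. -/
def DimPred (d : ℕ) (K : Finset (Finset α)) : Prop :=
  (∀ σ ∈ K, σ.card ≤ d) ∧ ∃ σ ∈ K, σ.card = d

/-- The increasing embedding of `Fin (d-1)` into `Fin d` skipping `r`. -/
def skipF {d : ℕ} (r : Fin d) (k : Fin (d - 1)) : Fin d :=
  if (k : ℕ) < (r : ℕ) then ⟨(k : ℕ), by have := k.isLt; omega⟩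
  else ⟨(k : ℕ) + 1, by have := k.isLt; omega⟩

/-- The cofactor `C_{r,c}(M)` (0-indexed). -/
noncomputable def cofactor {d : ℕ} (M : Matrix (Fin d) (Fin d) ℝ) (r c : Fin d) : ℝ :=
  (-1 : ℝ) ^ ((r : ℕ) + (c : ℕ)) * (M.submatrix (skipF r) (skipF c)).det

/-- The matrix `M_{p,σ}` whose `j`-th column is `(p(v_j), 1)`, `v_j` the `j`-th smallest
element of `σ`. -/
noncomputable def faceMat [LinearOrder α] (d : ℕ) (p : α → Fin (d - 1) → ℝ)
    (σ : Finset α) (hσ : σ.card = d) : Matrix (Fin d) (Fin d) ℝ :=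
  fun i j => if h : (i : ℕ) < d - 1 then p (σ.orderEmbOfFin hσ j) ⟨i, h⟩ else 1

/-- The volume-rigidity matrix `𝔙(K,p)`. -/
noncomputable def volMatrix [LinearOrder α] (d : ℕ) (K : Finset (Finset α))
    (p : α → Fin (d - 1) → ℝ) :
    Matrix (α × Fin (d - 1)) {σ : Finset α // σ ∈ K ∧ σ.card = d} ℝ :=
  fun vi σ =>
    if h : vi.1 ∈ σ.1 then
      cofactor (faceMat d p σ.1 σ.2.2) (Fin.castLE (Nat.sub_le d 1) vi.2)
        ((σ.1.orderIsoOfFin σ.2.2).symm ⟨vi.1, h⟩)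
    else 0

/-- `p : V → ℝ^{d-1}` is generic: its coordinates are algebraically independent over `ℚ`. -/
def GenericEmb (d : ℕ) (V : Finset α) (p : α → Fin (d - 1) → ℝ) : Prop :=
  AlgebraicIndependent ℚ (fun x : {a // a ∈ V} × Fin (d - 1) => p x.1.1 x.2)

/-- `K`, with vertex set `V`, is volume-rigid. -/
def VolumeRigid [Fintype α] [LinearOrder α] (d : ℕ) (V : Finset α)
    (K : Finset (Finset α)) : Prop :=
  ∀ p : α → Fin (d - 1) → ℝ, GenericEmb d V p →
    (volMatrix d K p).rank = (d - 1) * V.card - (d ^ 2 - d - 1)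

/-- `sign(τ,σ) = (-1)^j` where the unique element of `σ \ τ` is the `j`-th smallest
element of `σ` (1-based). -/
def faceSgn [LinearOrder α] (τ σ : Finset α) : ℤ :=
  if h : (σ \ τ).card = 1 then
    (-1 : ℤ) ^
      (((σ.sort (· ≤ ·)).idxOf ((σ \ τ).min' (Finset.card_pos.mp (by omega)))) + 1)
  else 0

/-- The boundary of the integral `(d-1)`-chain `z` of `K` vanishes. -/
def BoundaryZeroZ [LinearOrder α] (d : ℕ) (K : Finset (Finset α)) (z : Finset α → ℤ) : Prop :=
  ∀ τ : Finset α, τ.card = d - 1 →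
    ∑ σ ∈ K.filter (fun σ => σ.card = d ∧ τ ⊆ σ), faceSgn τ σ * z σ = 0

/-- The boundary of the real `(d-1)`-chain `z` of `K` vanishes. -/
def BoundaryZeroR [LinearOrder α] (d : ℕ) (K : Finset (Finset α)) (z : Finset α → ℝ) : Prop :=
  ∀ τ : Finset α, τ.card = d - 1 →
    ∑ σ ∈ K.filter (fun σ => σ.card = d ∧ τ ⊆ σ), (faceSgn τ σ : ℝ) * z σ = 0

/-- `K` is a minimal cycle over `ℤ`. -/
def IsMinimalCycleZ [LinearOrder α] (d : ℕ) (K : Finset (Finset α)) : Prop :=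
  (∃ z : Finset α → ℤ, (∀ σ, ¬(σ ∈ K ∧ σ.card = d) → z σ = 0) ∧
      BoundaryZeroZ d K z ∧ ∀ σ ∈ K, σ.card = d → z σ ≠ 0) ∧
  ∀ z : Finset α → ℤ, (∀ σ, ¬(σ ∈ K ∧ σ.card = d) → z σ = 0) →
    BoundaryZeroZ d K z → z ≠ 0 → ∀ σ ∈ K, σ.card = d → z σ ≠ 0

/-- `K` is `(d-1, d²-d-1)`-sparse on vertex set `V`. -/
def Sparse [DecidableEq α] (d : ℕ) (V : Finset α) (K : Finset (Finset α)) : Prop :=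
  ∀ A ⊆ V, d ≤ A.card →
    (K.filter (fun σ => σ.card = d ∧ σ ⊆ A)).card ≤ (d - 1) * A.card - (d ^ 2 - d - 1)

/-- `K` is `(d-1, d²-d-1)`-tight on vertex set `V`. -/
def Tight [DecidableEq α] (d : ℕ) (V : Finset α) (K : Finset (Finset α)) : Prop :=
  Sparse d V K ∧
    (K.filter (fun σ => σ.card = d)).card = (d - 1) * V.card - (d ^ 2 - d - 1)

end Defs

section Shifting

/-- The partial order `σ ≤_p τ`: equal cardinalities and the `i`-th smallest element of `σ`
is at most the `i`-th smallest element of `τ`, for every `i`. -/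
def pLE {n : ℕ} (σ τ : Finset (Fin n)) : Prop :=
  List.Forall₂ (· ≤ ·) (σ.sort (· ≤ ·)) (τ.sort (· ≤ ·))

/-- The strict partial order `σ <_p τ`. -/
def pLT {n : ℕ} (σ τ : Finset (Fin n)) : Prop := pLE σ τ ∧ σ ≠ τ

/-- `f_σ = f_{σ_1} ∧ ⋯ ∧ f_{σ_k}` in the exterior algebra of `ℝ^n`. -/
noncomputable def extWedge {n : ℕ} (f : Fin n → (Fin n → ℝ)) (σ : Finset (Fin n)) :
    ExteriorAlgebra ℝ (Fin n → ℝ) :=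
  ((σ.sort (· ≤ ·)).map (fun i => ExteriorAlgebra.ι ℝ (f i))).prod

/-- The standard basis of `ℝ^n`. -/
noncomputable def stdVec (n : ℕ) : Fin n → (Fin n → ℝ) := fun i => Pi.single i 1

/-- The subspace spanned by `{e_τ : τ ∉ K, |τ| = k}`. -/
noncomputable def faceIdeal {n : ℕ} (K : Finset (Finset (Fin n))) (k : ℕ) :
    Submodule ℝ (ExteriorAlgebra ℝ (Fin n → ℝ)) :=
  Submodule.span ℝ
    {x | ∃ τ : Finset (Fin n), τ ∉ K ∧ τ.card = k ∧ x = extWedge (stdVec n) τ}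

/-- The quotient map `q`. -/
noncomputable def qMap {n : ℕ} (K : Finset (Finset (Fin n))) (k : ℕ) :
    ExteriorAlgebra ℝ (Fin n → ℝ) → ExteriorAlgebra ℝ (Fin n → ℝ) ⧸ faceIdeal K k :=
  fun x => Submodule.Quotient.mk x

/-- The shifted family `Δ^<(K)` associated with a strict order `lt` on subsets of `[n]`,
computed with respect to the basis `f`. -/
def DeltaLt {n : ℕ} (K : Finset (Finset (Fin n))) (f : Fin n → (Fin n → ℝ))
    (lt : Finset (Fin n) → Finset (Fin n) → Prop) : Set (Finset (Fin n)) :=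
  {σ | qMap K σ.card (extWedge f σ) ∉
    Submodule.span ℝ (qMap K σ.card '' (extWedge f '' {τ | lt τ σ ∧ τ.card = σ.card}))}

/-- `Δ^p(K)`, computed with respect to the basis `f`. -/
def DeltaP {n : ℕ} (K : Finset (Finset (Fin n))) (f : Fin n → (Fin n → ℝ)) :
    Set (Finset (Fin n)) := DeltaLt K f pLT

/-- `f` is a generic basis of `ℝ^n`: it is a basis, `f_1 = (1,…,1)`, and the coordinates of
`f_2, …, f_n` are algebraically independent over `ℚ`. -/
def GenericBasis {n : ℕ} (f : Fin n → (Fin n → ℝ)) : Prop :=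
  (∃ b : Module.Basis (Fin n) ℝ (Fin n → ℝ), ⇑b = f) ∧
  (∀ i : Fin n, (i : ℕ) = 0 → f i = 1) ∧
  AlgebraicIndependent ℚ (fun x : {i : Fin n // (i : ℕ) ≠ 0} × Fin n => f x.1.1 x.2)

/-- The set `{1,3,4,…,d,n}` (1-based), i.e. `{0,2,3,…,d-1,n-1}` as a subset of `Fin n`. -/
def sigma0 (d n : ℕ) : Finset (Fin n) :=
  Finset.univ.filter (fun i : Fin n =>
    (i : ℕ) = 0 ∨ (2 ≤ (i : ℕ) ∧ (i : ℕ) + 1 ≤ d) ∨ (i : ℕ) + 1 = n)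

end Shifting

section ProofAux

variable {n : ℕ}

private lemma forall2_le_trans : ∀ {l₁ l₂ l₃ : List (Fin n)}, List.Forall₂ (· ≤ ·) l₁ l₂ →
    List.Forall₂ (· ≤ ·) l₂ l₃ → List.Forall₂ (· ≤ ·) l₁ l₃ := by
  intro l₁ l₂ l₃ h₁
  induction h₁ generalizing l₃ with
  | nil =>
    intro h₂
    cases h₂
    exact List.Forall₂.nil
  | @cons a b l₁ l₂ hab h ih =>
    intro h₂
    cases h₂ with
    | cons hbc h₂' => exact List.Forall₂.cons (le_trans hab hbc) (ih h₂')

private lemma forall2_sum_le : ∀ {l₁ l₂ : List (Fin n)}, List.Forall₂ (· ≤ ·) l₁ l₂ →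
    (l₁.map Fin.val).sum ≤ (l₂.map Fin.val).sum := by
  intro l₁ l₂ h
  induction h with
  | nil => simp
  | @cons a b l₁ l₂ hab h ih =>
    simp only [List.map_cons, List.sum_cons]
    have : (a : ℕ) ≤ (b : ℕ) := hab
    omega

private lemma forall2_sum_lt : ∀ {l₁ l₂ : List (Fin n)}, List.Forall₂ (· ≤ ·) l₁ l₂ →
    l₁ ≠ l₂ → (l₁.map Fin.val).sum < (l₂.map Fin.val).sum := by
  intro l₁ l₂ h
  induction h with
  | nil => intro h; exact absurd rfl h
  | @cons a b l₁ l₂ hab h ih =>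
    intro hne
    rcases eq_or_lt_of_le hab with heq | hlt
    · subst heq
      have hl : l₁ ≠ l₂ := by rintro rfl; exact hne rfl
      simp only [List.map_cons, List.sum_cons]
      exact Nat.add_lt_add_left (ih hl) _
    · have h1 : (a : ℕ) < (b : ℕ) := hlt
      have h2 := forall2_sum_le h
      simp only [List.map_cons, List.sum_cons]
      omega

/-- Sum of the elements of a finset, as naturals. -/
private def sumf (τ : Finset (Fin n)) : ℕ := ((τ.sort (· ≤ ·)).map Fin.val).sum

private lemma sumf_le_of_pLE {τ ρ : Finset (Fin n)} (h : pLE τ ρ) : sumf τ ≤ sumf ρ :=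
  forall2_sum_le h

private lemma sort_inj {τ ρ : Finset (Fin n)} (h : τ.sort (· ≤ ·) = ρ.sort (· ≤ ·)) :
    τ = ρ := by
  ext x
  rw [← Finset.mem_sort (· ≤ ·), ← Finset.mem_sort (· ≤ ·), h]

private lemma sumf_lt_of_pLT {τ ρ : Finset (Fin n)} (h : pLT τ ρ) : sumf τ < sumf ρ := by
  refine forall2_sum_lt h.1 ?_
  intro heq
  exact h.2 (sort_inj heq)

private lemma sumf_le_bound (τ : Finset (Fin n)) : sumf τ ≤ n * n := by
  have h1 : ((τ.sort (· ≤ ·)).map Fin.val).sum ≤ ((τ.sort (· ≤ ·)).map Fin.val).length • n := by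
    apply List.sum_le_card_nsmul
    intro x hx
    simp only [List.mem_map] at hx
    obtain ⟨i, _, rfl⟩ := hx
    exact le_of_lt i.isLt
  have h2 : ((τ.sort (· ≤ ·)).map Fin.val).length = τ.card := by
    rw [List.length_map, Finset.length_sort]
  have h3 : τ.card ≤ n := by
    simpa using Finset.card_le_univ τ
  calc sumf τ ≤ τ.card • n := by rw [← h2]; exact h1
    _ ≤ n * n := by simp only [smul_eq_mul]; exact Nat.mul_le_mul_right n h3

open Classical in
private noncomputable def cls (σ τ : Finset (Fin n)) : ℕ :=
  if pLT τ σ then 0 else if τ = σ then 1 else 2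

/-- index of `τ` in an arbitrary enumeration. -/
private noncomputable def idx (τ : Finset (Fin n)) : ℕ :=
  (Fintype.equivFin (Finset (Fin n)) τ : ℕ)

private lemma idx_lt (τ : Finset (Fin n)) : idx τ < Fintype.card (Finset (Fin n)) :=
  (Fintype.equivFin (Finset (Fin n)) τ).isLt

private lemma idx_inj {τ ρ : Finset (Fin n)} (h : idx τ = idx ρ) : τ = ρ := by
  have := Fin.val_injective h
  exact (Fintype.equivFin (Finset (Fin n))).injective this

/-- the key function whose induced order is the desired linear extension. -/
private noncomputable def key (σ τ : Finset (Fin n)) : ℕ :=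
  (cls σ τ * (n * n + 1) + sumf τ) * Fintype.card (Finset (Fin n)) + idx τ

private lemma key_inj {σ τ ρ : Finset (Fin n)} (h : key σ τ = key σ ρ) : τ = ρ := by
  unfold key at h
  have h1 := idx_lt τ
  have h2 := idx_lt ρ
  have e : idx τ % Fintype.card (Finset (Fin n)) = idx ρ % Fintype.card (Finset (Fin n)) := by
    have := congrArg (fun x => x % Fintype.card (Finset (Fin n))) h
    simpa [Nat.mul_add_mod'] using this
  rw [Nat.mod_eq_of_lt h1, Nat.mod_eq_of_lt h2] at e
  exact idx_inj e

private lemma cls_mono {σ τ ρ : Finset (Fin n)} (h : pLT τ ρ) : cls σ τ ≤ cls σ ρ := by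
  unfold cls
  by_cases h1 : pLT τ σ
  · rw [if_pos h1]; omega
  by_cases h2 : τ = σ
  · have hs := sumf_lt_of_pLT h
    have hρ1 : ¬ pLT ρ σ := by
      intro hc
      have h3 := sumf_lt_of_pLT hc
      have h4 : sumf τ = sumf σ := by rw [h2]
      omega
    rw [if_neg h1, if_pos h2, if_neg hρ1]
    split_ifs <;> omega
  · rw [if_neg h1, if_neg h2]
    have hρ1 : ¬ pLT ρ σ := fun hc => h1 ⟨forall2_le_trans h.1 hc.1, h2⟩
    have hρ2 : ρ ≠ σ := by rintro rfl; exact h1 ⟨h.1, h2⟩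
    rw [if_neg hρ1, if_neg hρ2]

private lemma key_mono {σ τ ρ : Finset (Fin n)} (h : pLT τ ρ) : key σ τ < key σ ρ := by
  have hc := cls_mono (σ := σ) h
  have hs := sumf_lt_of_pLT h
  have hb := sumf_le_bound τ
  have hA : cls σ τ * (n * n + 1) + sumf τ < cls σ ρ * (n * n + 1) + sumf ρ := by
    rcases Nat.lt_or_ge (cls σ τ) (cls σ ρ) with hlt | hge
    · have hm : (cls σ τ + 1) * (n * n + 1) ≤ cls σ ρ * (n * n + 1) :=
        Nat.mul_le_mul_right _ hlt
      rw [Nat.add_mul, one_mul] at hm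
      omega
    · have : cls σ τ = cls σ ρ := le_antisymm hc hge
      rw [this]
      omega
  unfold key
  have h1 := idx_lt τ
  have h2 := idx_lt ρ
  calc (cls σ τ * (n * n + 1) + sumf τ) * Fintype.card (Finset (Fin n)) + idx τ
      < (cls σ τ * (n * n + 1) + sumf τ + 1) * Fintype.card (Finset (Fin n)) := by
        rw [Nat.succ_mul]; omega
    _ ≤ (cls σ ρ * (n * n + 1) + sumf ρ) * Fintype.card (Finset (Fin n)) := by
        exact Nat.mul_le_mul_right _ hA
    _ ≤ _ := Nat.le_add_right _ _

private lemma pLT_of_key_lt {σ τ : Finset (Fin n)} (h : key σ τ < key σ σ) : pLT τ σ := by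
  by_contra hn
  have hττ : τ ≠ σ := by rintro rfl; exact lt_irrefl _ h
  have hclsσ : cls σ σ = 1 := by
    unfold cls; rw [if_neg (fun hc : pLT σ σ => hc.2 rfl), if_pos rfl]
  have hclsτ : cls σ τ = 2 := by
    unfold cls; rw [if_neg hn, if_neg hττ]
  have hb := sumf_le_bound σ
  have h1 := idx_lt σ
  have hA : cls σ σ * (n * n + 1) + sumf σ < cls σ τ * (n * n + 1) + sumf τ := by
    rw [hclsσ, hclsτ]; omega
  have hlt : key σ σ < key σ τ := by
    unfold key
    calc (cls σ σ * (n * n + 1) + sumf σ) * Fintype.card (Finset (Fin n)) + idx σ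
        < (cls σ σ * (n * n + 1) + sumf σ + 1) * Fintype.card (Finset (Fin n)) := by
          rw [Nat.succ_mul]; omega
      _ ≤ (cls σ τ * (n * n + 1) + sumf τ) * Fintype.card (Finset (Fin n)) :=
          Nat.mul_le_mul_right _ hA
      _ ≤ _ := Nat.le_add_right _ _
  omega

end ProofAux


/-- Claim 2.2: `Δ^p(K)` is the union of `Δ^{<_l}(K)` over all strict linear
orders `<_l` on the power set of `[n]` extending the strict partial order `<_p`. -/
theorem DeltaP_eq_iUnion_linear_extensions (n : ℕ) (K : Finset (Finset (Fin n)))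
    (hK : IsComplex K) (f : Fin n → (Fin n → ℝ)) (hf : GenericBasis f) :
    DeltaP K f =
      ⋃ r ∈ {r : Finset (Fin n) → Finset (Fin n) → Prop |
          IsStrictTotalOrder (Finset (Fin n)) r ∧ ∀ a b, pLT a b → r a b},
        DeltaLt K f r := by
  classical
  ext σ
  simp only [Set.mem_iUnion, Set.mem_setOf_eq]
  constructor
  · intro hσ
    refine ⟨fun τ ρ => key σ τ < key σ ρ, ⟨?_, fun a b hab => key_mono hab⟩, ?_⟩
    · letI h1 : IsTrichotomous (Finset (Fin n)) (fun τ ρ => key σ τ < key σ ρ) := ⟨by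
        intro a b
        rcases lt_trichotomy (key σ a) (key σ b) with h | h | h
        · exact fun h' _ => absurd h h'
        · exact fun _ _ => key_inj h
        · exact fun _ h' => absurd h h'⟩
      letI h2 : IsIrrefl (Finset (Fin n)) (fun τ ρ => key σ τ < key σ ρ) :=
        ⟨fun a => lt_irrefl _⟩
      letI h3 : IsTrans (Finset (Fin n)) (fun τ ρ => key σ τ < key σ ρ) :=
        ⟨fun a b c h1 h2 => lt_trans h1 h2⟩
      exact { }
    · have hset : {τ : Finset (Fin n) | key σ τ < key σ σ ∧ τ.card = σ.card}
          = {τ : Finset (Fin n) | pLT τ σ ∧ τ.card = σ.card} := by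
        ext τ
        simp only [Set.mem_setOf_eq]
        exact and_congr_left (fun _ => ⟨pLT_of_key_lt, key_mono⟩)
      have hσ' : σ ∈ DeltaLt K f pLT := hσ
      simp only [DeltaLt, Set.mem_setOf_eq] at hσ' ⊢
      rwa [hset]
  · rintro ⟨r, ⟨hsto, hext⟩, hσ⟩
    simp only [DeltaP, DeltaLt, Set.mem_setOf_eq] at hσ ⊢
    intro hmem
    apply hσ
    refine Submodule.span_mono ?_ hmem
    exact Set.image_mono (Set.image_mono (fun τ hτ => ⟨hext _ _ hτ.1, hτ.2⟩))
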